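/- Let F be a real quadratic field with real embeddings σ, σ' and discriminant Δ_F, and let I = ℤ·1 + ℤ·f be a reduced fractional ideal of F, where σ(f) = (b + √Δ_F)/(2a) and σ'(f) = (b − √Δ_F)/(2a) for integers a > 0, b, c with Δ_F = b² − 4ac and |√Δ_F − 2a| < b < √Δ_F. If √(Δ_F/4) ≤ a ≤ √(Δ_F/3) and a − √(Δ_F − 3a²) ≤ b ≤ √(4a² − Δ_F), then: (i) f is a shortest nonzero vector of the lattice I, i.e. σ(g)² + σ'(g)² ≥ σ(f)² + σ'(f)² for every nonzero g ∈ I; and (ii) the size-reduction condition |σ(f) + σ'(f)| ≤ (σ(f)² + σ'(f)²)/2 holds, so that the vectors (σ(f), σ'(f)) and (1,1) form an LLL-reduced basis of the lattice I. -/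

import Mathlib

open NumberField
open scoped nonZeroDivisors

/-- The `u`-length of an element `g` of a real quadratic field with real embeddings `σ, σ'`:
`‖g‖_u = √(u₁²·σ(g)² + u₂²·σ'(g)²)`. -/
noncomputable def normU {F : Type*} [Field F] (σ σ' : F →+* ℝ) (u₁ u₂ : ℝ) (g : F) : ℝ :=
  Real.sqrt (u₁ ^ 2 * (σ g) ^ 2 + u₂ ^ 2 * (σ' g) ^ 2)

/-- A fractional ideal `I` is reduced if `1 ∈ I` and the only `g ∈ I` with `|σ g| < 1` and
`|σ' g| < 1` is `g = 0`. -/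
def IsReducedIdeal {F : Type*} [Field F] [NumberField F] (σ σ' : F →+* ℝ)
    (I : FractionalIdeal (𝓞 F)⁰ F) : Prop :=
  (1 : F) ∈ I ∧ ∀ g ∈ I, |σ g| < 1 → |σ' g| < 1 → g = 0

/-- `1` is primitive in `I`: `1 ∈ I` and no `1/d ∈ I` for an integer `d ≥ 2`. -/
def IsOnePrimitive {F : Type*} [Field F] [NumberField F]
    (I : FractionalIdeal (𝓞 F)⁰ F) : Prop :=
  (1 : F) ∈ I ∧ ∀ d : ℕ, 2 ≤ d → ((d : F))⁻¹ ∉ I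

/-- `I` is 1-reduced: `1` is primitive in `I` and for some metric `u = (u₁, u₂)` of positive
reals, `1` is a shortest nonzero vector of `I` with respect to `‖·‖_u`. -/
def IsOneReduced {F : Type*} [Field F] [NumberField F] (σ σ' : F →+* ℝ)
    (I : FractionalIdeal (𝓞 F)⁰ F) : Prop :=
  IsOnePrimitive I ∧ ∃ u₁ u₂ : ℝ, 0 < u₁ ∧ 0 < u₂ ∧
    ∀ g ∈ I, g ≠ 0 → normU σ σ' u₁ u₂ 1 ≤ normU σ σ' u₁ u₂ g

set_option maxHeartbeats 800000 in
/-- Lemma 4.3: under the stated bounds on `a` and `b`, `f` is a shortest nonzero vector of the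
lattice `I = ℤ + ℤf`, and `(σ f, σ' f)` together with `(1,1)` form an LLL-reduced basis, the
size-reduction condition being `|σ f + σ' f| ≤ (σ(f)² + σ'(f)²)/2`. -/
theorem f_is_shortest_and_LLL {F : Type*} [Field F] [NumberField F]
    (hdeg : Module.finrank ℚ F = 2)
    (σ σ' : F →+* ℝ) (hσ : σ ≠ σ')
    (I : FractionalIdeal (𝓞 F)⁰ F) (f : F) (a b c : ℤ) (ha : 0 < a)
    (habc : (discr F : ℤ) = b ^ 2 - 4 * a * c)
    (hσf : σ f = ((b : ℝ) + Real.sqrt (discr F)) / (2 * a))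
    (hσ'f : σ' f = ((b : ℝ) - Real.sqrt (discr F)) / (2 * a))
    (hb1 : |Real.sqrt (discr F) - 2 * a| < (b : ℝ))
    (hb2 : (b : ℝ) < Real.sqrt (discr F))
    (hI : ∀ x : F, x ∈ I ↔ ∃ m n : ℤ, x = (m : F) + (n : F) * f)
    (hred : IsReducedIdeal σ σ' I)
    (ha1 : Real.sqrt ((discr F : ℝ) / 4) ≤ (a : ℝ))
    (ha2 : (a : ℝ) ≤ Real.sqrt ((discr F : ℝ) / 3))
    (hb3 : (a : ℝ) - Real.sqrt ((discr F : ℝ) - 3 * (a : ℝ) ^ 2) ≤ (b : ℝ))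
    (hb4 : (b : ℝ) ≤ Real.sqrt (4 * (a : ℝ) ^ 2 - (discr F : ℝ))) :
    (∀ g ∈ I, g ≠ 0 → (σ f) ^ 2 + (σ' f) ^ 2 ≤ (σ g) ^ 2 + (σ' g) ^ 2) ∧
      |σ f + σ' f| ≤ ((σ f) ^ 2 + (σ' f) ^ 2) / 2 := by
  set D : ℝ := ((discr F : ℤ) : ℝ) with hD
  set s : ℝ := Real.sqrt D with hsdef
  have hA : (0:ℝ) < (a:ℝ) := by exact_mod_cast ha
  have hD0 : (0:ℝ) < D := by
    have h1 : (0:ℝ) < Real.sqrt (D / 3) := lt_of_lt_of_le hA ha2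
    have := Real.sqrt_pos.mp h1
    linarith
  have hD3 : 3 * (a:ℝ)^2 ≤ D := by
    have h1 : (a:ℝ)^2 ≤ D / 3 := (Real.le_sqrt hA.le (by linarith : (0:ℝ) ≤ D/3)).mp ha2
    linarith
  have hs2 : s^2 = D := Real.sq_sqrt hD0.le
  have hb0 : (0:ℝ) < (b:ℝ) := lt_of_le_of_lt (abs_nonneg _) hb1
  have hb2D : ((b:ℝ))^2 < D := by nlinarith [hb2, hs2, Real.sqrt_nonneg D]
  have h4aD : ((b:ℝ))^2 ≤ 4 * (a:ℝ)^2 - D := by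
    have h1 : (0:ℝ) < Real.sqrt (4 * (a:ℝ)^2 - D) := lt_of_lt_of_le hb0 hb4
    have h2 := Real.sqrt_pos.mp h1
    have h3 := Real.sq_sqrt h2.le
    nlinarith [hb4, Real.sqrt_nonneg (4 * (a:ℝ)^2 - D)]
  have hbA : (b:ℝ) ≤ (a:ℝ) := by nlinarith
  have hb3sq : ((a:ℝ) - b)^2 ≤ D - 3 * (a:ℝ)^2 := by
    have h0 : (0:ℝ) ≤ D - 3 * (a:ℝ)^2 := by linarith
    have h1 := Real.sq_sqrt h0
    have hb3' : (a:ℝ) - b ≤ Real.sqrt (D - 3 * (a:ℝ)^2) := by linarith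
    nlinarith [mul_self_le_mul_self (sub_nonneg.mpr hbA) hb3',
      Real.sqrt_nonneg (D - 3 * (a:ℝ)^2)]
  have hkey : 4 * (a:ℝ) * b ≤ (b:ℝ)^2 + D := by
    nlinarith [hb3sq, mul_nonneg (sub_nonneg.mpr hbA) (show (0:ℝ) ≤ 2*(a:ℝ) - b by linarith)]
  clear ha1 ha2 hb3 hb4 hb1 hb2
  clear_value s
  clear_value D
  set X : ℝ := σ f with hX
  set Y : ℝ := σ' f with hY
  clear_value X Y
  clear hD hsdef hdeg hσ hred habc ha
  have hA2 : ((a:ℝ)) ≠ 0 := ne_of_gt hA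
  have hsum : X + Y = (b:ℝ) / a := by
    rw [hσf, hσ'f]; field_simp; ring
  have hx2y2 : X^2 + Y^2 = ((b:ℝ)^2 + D) / (2 * (a:ℝ)^2) := by
    rw [hσf, hσ'f]; field_simp; linear_combination 2 * hs2
  clear hσf hσ'f hs2
  constructor
  · intro g hg hg0
    obtain ⟨m, n, hgmn⟩ := (hI g).mp hg
    clear hI hg
    have hσg : σ g = (m:ℝ) + (n:ℝ) * X := by
      rw [hgmn, map_add, map_mul, map_intCast, map_intCast, ← hX]
    have hσ'g : σ' g = (m:ℝ) + (n:ℝ) * Y := by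
      rw [hgmn, map_add, map_mul, map_intCast, map_intCast, ← hY]
    have hmn : ¬ (m = 0 ∧ n = 0) := by
      rintro ⟨rfl, rfl⟩
      push_cast at hgmn
      simp only [zero_mul, add_zero, zero_add] at hgmn
      exact hg0 hgmn
    have hP : 0 ≤ 4*(m:ℝ)^2*(a:ℝ)^2 + 4*(m:ℝ)*(n:ℝ)*(b:ℝ)*(a:ℝ) + ((n:ℝ)^2-1)*((b:ℝ)^2+D) := by
      have hcase : n = 0 ∨ n = 1 ∨ n = -1 ∨ n ≤ -2 ∨ 2 ≤ n := by omega
      rcases hcase with rfl | rfl | rfl | hn | hn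
      · have hm : m ≠ 0 := by tauto
        have hm1 : (1:ℝ) ≤ (m:ℝ)^2 := by
          have h1 : (1:ℤ) ≤ m^2 := by nlinarith [Int.one_le_abs hm, sq_abs m, abs_nonneg m]
          exact_mod_cast h1
        push_cast
        nlinarith [hm1, sq_nonneg ((a:ℝ)), hA]
      · push_cast
        rcases le_or_gt 0 m with hm | hm
        · have hm0 : (0:ℝ) ≤ (m:ℝ) := by exact_mod_cast hm
          nlinarith [mul_nonneg hm0 hA.le, hb0]
        · have hm' : m ≤ -1 := by omega
          have hm1 : (m:ℝ) ≤ -1 := by exact_mod_cast hm'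
          nlinarith [mul_nonneg (show (0:ℝ) ≤ -((m:ℝ)*(a:ℝ)) by nlinarith)
            (show (0:ℝ) ≤ -((m:ℝ)*(a:ℝ) + b) by nlinarith)]
      · push_cast
        rcases le_or_gt m 0 with hm | hm
        · have hm0 : (m:ℝ) ≤ 0 := by exact_mod_cast hm
          nlinarith [mul_nonneg (neg_nonneg.mpr hm0) hA.le, hb0]
        · have hm' : (1:ℤ) ≤ m := hm
          have hm1 : (1:ℝ) ≤ (m:ℝ) := by exact_mod_cast hm'
          nlinarith [mul_nonneg (show (0:ℝ) ≤ (m:ℝ)*(a:ℝ) by nlinarith)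
            (show (0:ℝ) ≤ (m:ℝ)*(a:ℝ) - b by nlinarith)]
      · have hn4 : (4:ℝ) ≤ (n:ℝ)^2 := by
          have h : (n:ℝ) ≤ -2 := by exact_mod_cast hn
          nlinarith
        nlinarith [sq_nonneg (2*(m:ℝ)*(a:ℝ) + (n:ℝ)*(b:ℝ)), hb2D, hD0]
      · have hn4 : (4:ℝ) ≤ (n:ℝ)^2 := by
          have h : (2:ℝ) ≤ (n:ℝ) := by exact_mod_cast hn
          nlinarith
        nlinarith [sq_nonneg (2*(m:ℝ)*(a:ℝ) + (n:ℝ)*(b:ℝ)), hb2D, hD0]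
    have expand : (σ g)^2 + (σ' g)^2
        = 2*(m:ℝ)^2 + 2*(m:ℝ)*(n:ℝ)*((b:ℝ)/a) + (n:ℝ)^2*(((b:ℝ)^2+D)/(2*(a:ℝ)^2)) := by
      rw [hσg, hσ'g]
      linear_combination (2*(m:ℝ)*(n:ℝ)) * hsum + (n:ℝ)^2 * hx2y2
    have e3 : 2*(m:ℝ)^2 + 2*(m:ℝ)*(n:ℝ)*((b:ℝ)/a) + (n:ℝ)^2*(((b:ℝ)^2+D)/(2*(a:ℝ)^2))
        - ((b:ℝ)^2+D)/(2*(a:ℝ)^2)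
        = (4*(m:ℝ)^2*(a:ℝ)^2 + 4*(m:ℝ)*(n:ℝ)*(b:ℝ)*(a:ℝ) + ((n:ℝ)^2-1)*((b:ℝ)^2+D))
          / (2*(a:ℝ)^2) := by
      field_simp
      ring
    have hden : (0:ℝ) < 2*(a:ℝ)^2 := by positivity
    have hdiv := div_nonneg hP hden.le
    rw [hx2y2, expand]
    linarith
  · have hpos : 0 ≤ X + Y := by
      rw [hsum]; positivity
    rw [abs_of_nonneg hpos, hsum, hx2y2]
    rw [div_div, div_le_div_iff₀ hA (by positivity : (0:ℝ) < 2*(a:ℝ)^2*2)]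
    nlinarith [hkey, hA, mul_pos hA hA]
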